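/- Let d ≥ 1, let Θ ⊆ ℝ^d be a closed set with nonempty complement A = ℝ^d ∖ Θ, and suppose μ: ℝ^d → ℝ^m is differentiable at every point of A with bounded derivative on A. Then the optimal intrinsic Lipschitz constant of μ on A equals the supremum of the derivative norms: sup{ ‖μ(x) − μ(y)‖ / ρ(x,y) : x, y ∈ A with 0 < ρ(x,y) < ∞ } = sup{ ‖μ'(x)‖ : x ∈ A }, where ρ is the intrinsic metric on A and ‖μ'(x)‖ denotes the operator norm of the derivative. -/

import Mathlib

open Set ENNReal

/-- The length of a curve `γ : ℝ → ℝ^d` (considered on the parameter interval `[0,1]`):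
the supremum over all partitions `0 = t₀ < ⋯ < tₙ = 1` of `∑ ‖γ tₖ - γ tₖ₋₁‖`,
possibly infinite.  This coincides with the total variation of `γ` on `[0,1]`. -/
noncomputable def curveLength {d : ℕ} (γ : ℝ → EuclideanSpace ℝ (Fin d)) : ℝ≥0∞ :=
  eVariationOn γ (Set.Icc 0 1)

/-- The intrinsic (geodesic) metric of a set `A ⊆ ℝ^d`: the infimum of the lengths of
curves in `A` from `x` to `y`; the infimum over the empty set being `∞`. -/
noncomputable def intrinsicDist {d : ℕ} (A : Set (EuclideanSpace ℝ (Fin d)))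
    (x y : EuclideanSpace ℝ (Fin d)) : ℝ≥0∞ :=
  ⨅ γ ∈ {γ : ℝ → EuclideanSpace ℝ (Fin d) |
      ContinuousOn γ (Set.Icc 0 1) ∧ γ '' Set.Icc 0 1 ⊆ A ∧ γ 0 = x ∧ γ 1 = y},
    curveLength γ

-- segment curve
lemma seg_curveLength {d : ℕ} (y z : EuclideanSpace ℝ (Fin d)) :
    curveLength (fun t : ℝ => y + t • (z - y)) ≤ ENNReal.ofReal ‖z - y‖ := by
  set γ : ℝ → EuclideanSpace ℝ (Fin d) := fun t : ℝ => y + t • (z - y) with hγdef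
  have hlip : LipschitzWith ‖z - y‖₊ γ := by
    apply LipschitzWith.of_dist_le_mul
    intro a b
    simp only [hγdef, dist_eq_norm]
    have : y + a • (z - y) - (y + b • (z - y)) = (a - b) • (z - y) := by
      module
    rw [this, norm_smul]
    simp [Real.norm_eq_abs, Real.dist_eq, coe_nnnorm, mul_comm]
  have h1 : eVariationOn (γ ∘ id) (Set.Icc (0:ℝ) 1) ≤
      (‖z - y‖₊ : ℝ≥0∞) * eVariationOn id (Set.Icc (0:ℝ) 1) :=
    LipschitzOnWith.comp_eVariationOn_le (f := γ) (C := ‖z - y‖₊) (t := Set.univ)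
      (LipschitzWith.lipschitzOnWith (s := Set.univ) hlip) (Set.mapsTo_univ _ _)
  have h2 : eVariationOn (id : ℝ → ℝ) (Set.Icc (0:ℝ) 1) ≤ 1 := by
    have := MonotoneOn.eVariationOn_le (f := (id : ℝ → ℝ)) (s := Set.Icc (0:ℝ) 1)
      (monotoneOn_id) (a := 0) (b := 1) (by simp) (by simp)
    simpa using this.trans_eq (by norm_num)
  calc curveLength γ = eVariationOn (γ ∘ id) (Set.Icc (0:ℝ) 1) := rfl
    _ ≤ (‖z - y‖₊ : ℝ≥0∞) * eVariationOn id (Set.Icc (0:ℝ) 1) := h1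
    _ ≤ (‖z - y‖₊ : ℝ≥0∞) * 1 := by gcongr
    _ = ENNReal.ofReal ‖z - y‖ := by
      rw [mul_one, ← coe_nnnorm, ENNReal.ofReal_coe_nnreal]

lemma intrinsicDist_le_of_segment {d : ℕ} {A : Set (EuclideanSpace ℝ (Fin d))}
    {y z : EuclideanSpace ℝ (Fin d)} (h : segment ℝ y z ⊆ A) :
    intrinsicDist A y z ≤ ENNReal.ofReal ‖z - y‖ := by
  set γ : ℝ → EuclideanSpace ℝ (Fin d) := fun t : ℝ => y + t • (z - y) with hγdef
  have hmem : γ ∈ {γ : ℝ → EuclideanSpace ℝ (Fin d) |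
      ContinuousOn γ (Set.Icc 0 1) ∧ γ '' Set.Icc 0 1 ⊆ A ∧ γ 0 = y ∧ γ 1 = z} := by
    refine ⟨(Continuous.continuousOn (by fun_prop)), ?_, by simp [hγdef], by simp [hγdef]⟩
    rintro _ ⟨t, ⟨ht0, ht1⟩, rfl⟩
    apply h
    refine ⟨1 - t, t, by linarith, ht0, by ring, ?_⟩
    simp only [hγdef]
    module
  exact (iInf₂_le γ hmem).trans (seg_curveLength y z)

lemma edist_le_intrinsicDist {d : ℕ} {A : Set (EuclideanSpace ℝ (Fin d))}
    (x y : EuclideanSpace ℝ (Fin d)) :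
    edist x y ≤ intrinsicDist A x y := by
  refine le_iInf₂ fun γ hγ => ?_
  obtain ⟨hcont, hsub, h0, h1⟩ := hγ
  calc edist x y = edist (γ 0) (γ 1) := by rw [h0, h1]
    _ ≤ eVariationOn γ (Set.Icc 0 1) :=
        eVariationOn.edist_le γ (by simp) (by simp)

-- key lemma: bound along a curve
lemma key_curve {d m : ℕ} {A : Set (EuclideanSpace ℝ (Fin d))} (hA : IsOpen A)
    {μ : EuclideanSpace ℝ (Fin d) → EuclideanSpace ℝ (Fin m)}
    (hdiff : ∀ x ∈ A, DifferentiableAt ℝ μ x)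
    {C : ℝ} (hC : ∀ x ∈ A, ‖fderiv ℝ μ x‖ ≤ C)
    {γ : ℝ → EuclideanSpace ℝ (Fin d)} (hγ : ContinuousOn γ (Set.Icc 0 1))
    (hγA : γ '' Set.Icc 0 1 ⊆ A) :
    ENNReal.ofReal ‖μ (γ 1) - μ (γ 0)‖ ≤ ENNReal.ofReal C * curveLength γ := by
  have hC0 : 0 ≤ C := le_trans (norm_nonneg _) (hC (γ 0) (hγA ⟨0, by simp, rfl⟩))
  have hK : IsCompact (γ '' Set.Icc 0 1) := isCompact_Icc.image_of_continuousOn hγ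
  obtain ⟨δ, δpos, hδ⟩ := hK.exists_thickening_subset_open hA hγA
  have hball : ∀ p ∈ γ '' Set.Icc 0 1, Metric.ball p δ ⊆ A := by
    intro p hp q hq
    apply hδ
    rw [Metric.mem_thickening_iff]
    exact ⟨p, hp, hq⟩
  have huc := isCompact_Icc.uniformContinuousOn_of_continuous hγ
  rw [Metric.uniformContinuousOn_iff] at huc
  obtain ⟨η, ηpos, hη⟩ := huc δ δpos
  obtain ⟨n, hn⟩ := exists_nat_one_div_lt ηpos
  set N : ℕ := n + 1 with hN
  have hNpos : (0:ℝ) < N := by positivity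
  have hNcast : (N:ℝ) = (n:ℝ) + 1 := by rw [hN]; push_cast; ring
  set u : ℕ → ℝ := fun k => min ((k : ℝ) / N) 1 with hu
  have humem : ∀ k, u k ∈ Set.Icc (0:ℝ) 1 := by
    intro k
    constructor
    · apply le_min (by positivity) zero_le_one
    · exact min_le_right _ _
  have humono : Monotone u := by
    intro a b hab
    apply min_le_min _ le_rfl
    gcongr
  have hu0 : u 0 = 0 := by simp [hu]
  have huN : u N = 1 := by
    simp [hu, div_self hNpos.ne']
  have hstep : ∀ i, u (i + 1) - u i ≤ 1 / N := by
    intro i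
    rcases le_or_gt ((i:ℝ) + 1) N with h | h
    · have h1 : u (i+1) = ((i:ℝ)+1)/N := by
        simp only [hu]
        rw [min_eq_left]
        · push_cast; ring_nf
        · rw [div_le_one hNpos]; push_cast; linarith [hNcast]
      have h2 : u i = (i:ℝ)/N := by
        simp only [hu]
        rw [min_eq_left]
        rw [div_le_one hNpos]; push_cast; linarith [hNcast]
      rw [h1, h2]; field_simp; linarith
    · have hiN : (N:ℝ) ≤ i := by
        have : (N:ℕ) ≤ i := by exact_mod_cast Nat.lt_succ_iff.mp (by exact_mod_cast h)
        exact_mod_cast this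
      have h2 : u i = 1 := by
        simp only [hu]
        rw [min_eq_right]
        rw [le_div_iff₀ hNpos]; linarith
      have h1 : u (i+1) ≤ 1 := min_le_right _ _
      have := one_div_pos.mpr hNpos
      linarith
  have hclose : ∀ i, dist (γ (u (i+1))) (γ (u i)) < δ := by
    intro i
    apply hη _ (humem _) _ (humem _)
    rw [Real.dist_eq, abs_of_nonneg (sub_nonneg.mpr (humono (Nat.le_succ i)))]
    calc u (i+1) - u i ≤ 1 / N := hstep i
      _ < η := by exact_mod_cast hn
  have hstepbound : ∀ i, ‖μ (γ (u (i+1))) - μ (γ (u i))‖ ≤ C * ‖γ (u (i+1)) - γ (u i)‖ := by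
    intro i
    have hmemK : γ (u i) ∈ γ '' Set.Icc 0 1 := ⟨u i, humem i, rfl⟩
    have hsub : Metric.ball (γ (u i)) δ ⊆ A := hball _ hmemK
    exact (convex_ball _ _).norm_image_sub_le_of_norm_fderiv_le
      (fun x hx => hdiff x (hsub hx)) (fun x hx => hC x (hsub hx))
      (Metric.mem_ball_self δpos) (Metric.mem_ball.mpr (hclose i))
  set S : ℝ := ∑ i ∈ Finset.range N, ‖γ (u (i+1)) - γ (u i)‖ with hS
  have hmain : ‖μ (γ 1) - μ (γ 0)‖ ≤ C * S := by
    have htel : μ (γ 1) - μ (γ 0) =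
        ∑ i ∈ Finset.range N, (μ (γ (u (i+1))) - μ (γ (u i))) := by
      rw [Finset.sum_range_sub (fun i => μ (γ (u i))), hu0, huN]
    rw [htel]
    calc ‖∑ i ∈ Finset.range N, (μ (γ (u (i+1))) - μ (γ (u i)))‖
        ≤ ∑ i ∈ Finset.range N, ‖μ (γ (u (i+1))) - μ (γ (u i))‖ := norm_sum_le _ _
      _ ≤ ∑ i ∈ Finset.range N, C * ‖γ (u (i+1)) - γ (u i)‖ :=
          Finset.sum_le_sum fun i _ => hstepbound i
      _ = C * S := by rw [hS, Finset.mul_sum]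
  calc ENNReal.ofReal ‖μ (γ 1) - μ (γ 0)‖ ≤ ENNReal.ofReal (C * S) :=
        ENNReal.ofReal_le_ofReal hmain
    _ = ENNReal.ofReal C * ENNReal.ofReal S := ENNReal.ofReal_mul hC0
    _ ≤ ENNReal.ofReal C * curveLength γ := by
        gcongr
        rw [hS, ENNReal.ofReal_sum_of_nonneg (fun i _ => norm_nonneg _)]
        have : ∀ i, ENNReal.ofReal ‖γ (u (i+1)) - γ (u i)‖ =
            edist (γ (u (i+1))) (γ (u i)) := by
          intro i
          rw [edist_dist, dist_eq_norm]
        simp_rw [this]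
        exact eVariationOn.sum_le (f := γ) (n := N) humono (fun i => humem i)

lemma key_dist {d m : ℕ} {A : Set (EuclideanSpace ℝ (Fin d))} (hA : IsOpen A)
    {μ : EuclideanSpace ℝ (Fin d) → EuclideanSpace ℝ (Fin m)}
    (hdiff : ∀ x ∈ A, DifferentiableAt ℝ μ x)
    {C : ℝ} (hC0 : 0 ≤ C) (hC : ∀ x ∈ A, ‖fderiv ℝ μ x‖ ≤ C)
    {x y : EuclideanSpace ℝ (Fin d)} (hfin : intrinsicDist A x y ≠ ⊤) :
    ‖μ x - μ y‖ ≤ C * (intrinsicDist A x y).toReal := by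
  apply _root_.le_of_forall_pos_le_add
  intro ε εpos
  have hlt : intrinsicDist A x y < intrinsicDist A x y + ENNReal.ofReal (ε / (C + 1)) := by
    apply ENNReal.lt_add_right hfin
    simp [ENNReal.ofReal_eq_zero, not_le]
    positivity
  obtain ⟨γ, hγmem, hγlt⟩ : ∃ γ, γ ∈ {γ : ℝ → EuclideanSpace ℝ (Fin d) |
      ContinuousOn γ (Set.Icc 0 1) ∧ γ '' Set.Icc 0 1 ⊆ A ∧ γ 0 = x ∧ γ 1 = y} ∧
      curveLength γ < intrinsicDist A x y + ENNReal.ofReal (ε / (C + 1)) := by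
    rw [intrinsicDist] at hlt
    simp only [iInf_lt_iff, exists_prop] at hlt
    exact hlt
  obtain ⟨hcont, hsub, h0, h1⟩ := hγmem
  have hlen : ENNReal.ofReal ‖μ (γ 1) - μ (γ 0)‖ ≤ ENNReal.ofReal C * curveLength γ :=
    key_curve hA hdiff hC hcont hsub
  have hfin' : curveLength γ ≠ ⊤ :=
    (hγlt.trans (ENNReal.add_lt_top.mpr ⟨hfin.lt_top, ENNReal.ofReal_lt_top⟩)).ne
  have hγreal : (curveLength γ).toReal ≤ (intrinsicDist A x y).toReal + ε / (C + 1) := by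
    have := hγlt.le
    calc (curveLength γ).toReal ≤ (intrinsicDist A x y + ENNReal.ofReal (ε / (C+1))).toReal := by
          apply ENNReal.toReal_mono _ this
          exact ENNReal.add_ne_top.mpr ⟨hfin, ENNReal.ofReal_ne_top⟩
      _ = (intrinsicDist A x y).toReal + ε / (C + 1) := by
          rw [ENNReal.toReal_add hfin ENNReal.ofReal_ne_top,
            ENNReal.toReal_ofReal (by positivity)]
  have hreal : ‖μ x - μ y‖ ≤ C * (curveLength γ).toReal := by
    have := (ENNReal.ofReal_le_iff_le_toReal (by
      exact ENNReal.mul_ne_top ENNReal.ofReal_ne_top hfin')).mp hlen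
    rw [ENNReal.toReal_mul, ENNReal.toReal_ofReal hC0] at this
    rw [← h0, ← h1, norm_sub_rev]
    exact this
  calc ‖μ x - μ y‖ ≤ C * (curveLength γ).toReal := hreal
    _ ≤ C * ((intrinsicDist A x y).toReal + ε / (C + 1)) := by
        apply mul_le_mul_of_nonneg_left hγreal hC0
    _ = C * (intrinsicDist A x y).toReal + C * (ε / (C+1)) := by ring
    _ ≤ C * (intrinsicDist A x y).toReal + ε := by
        have : C * (ε / (C+1)) ≤ ε := by
          rw [mul_div_assoc']
          rw [div_le_iff₀ (by linarith)]
          nlinarith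
        linarith

/-- for `Θ ⊆ ℝ^d` closed with nonempty complement `A` and `μ : ℝ^d → ℝ^m`
differentiable on `A` with bounded derivative, the optimal Lipschitz constant of `μ|_A`
w.r.t. the intrinsic metric on `A` equals `sup { ‖μ'(x)‖ : x ∈ A }`. -/
theorem intrinsic_lipschitz_constant_eq_sup_deriv
    (d m : ℕ) (hd : 1 ≤ d) (Θ : Set (EuclideanSpace ℝ (Fin d))) (hΘ : IsClosed Θ)
    (A : Set (EuclideanSpace ℝ (Fin d))) (hA : A = Θᶜ) (hAne : A.Nonempty)
    (μ : EuclideanSpace ℝ (Fin d) → EuclideanSpace ℝ (Fin m))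
    (hdiff : ∀ x ∈ A, DifferentiableAt ℝ μ x)
    (hbound : ∃ C : ℝ, ∀ x ∈ A, ‖fderiv ℝ μ x‖ ≤ C) :
    sSup {r : ℝ | ∃ x ∈ A, ∃ y ∈ A, 0 < intrinsicDist A x y ∧ intrinsicDist A x y ≠ ⊤ ∧
        r = ‖μ x - μ y‖ / (intrinsicDist A x y).toReal}
      = sSup {r : ℝ | ∃ x ∈ A, r = ‖fderiv ℝ μ x‖} := by
  have hAopen : IsOpen A := by rw [hA]; exact hΘ.isOpen_compl
  obtain ⟨C₀, hC₀⟩ := hbound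
  set S1 : Set ℝ := {r : ℝ | ∃ x ∈ A, ∃ y ∈ A, 0 < intrinsicDist A x y ∧
      intrinsicDist A x y ≠ ⊤ ∧ r = ‖μ x - μ y‖ / (intrinsicDist A x y).toReal} with hS1def
  set S2 : Set ℝ := {r : ℝ | ∃ x ∈ A, r = ‖fderiv ℝ μ x‖} with hS2def
  have hS2bdd : BddAbove S2 := ⟨C₀, by rintro r ⟨x, hx, rfl⟩; exact hC₀ x hx⟩
  set M := sSup S2 with hMdef
  have hM : ∀ z ∈ A, ‖fderiv ℝ μ z‖ ≤ M := fun z hz => le_csSup hS2bdd ⟨z, hz, rfl⟩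
  have hM0 : 0 ≤ M := le_trans (norm_nonneg _) (hM _ hAne.some_mem)
  have hub : ∀ r ∈ S1, r ≤ M := by
    rintro r ⟨x, hx, y, hy, hpos, hfin, rfl⟩
    have h := key_dist hAopen hdiff hM0 hM hfin
    have htR : 0 < (intrinsicDist A x y).toReal := ENNReal.toReal_pos hpos.ne' hfin
    rw [div_le_iff₀ htR]
    exact h
  have hS1bdd : BddAbove S1 := ⟨M, hub⟩
  -- a nonnegative element of S1
  obtain ⟨x₀, hx₀⟩ := hAne
  obtain ⟨δ, δpos, hδ⟩ := Metric.isOpen_iff.mp hAopen x₀ hx₀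
  set v₀ : EuclideanSpace ℝ (Fin d) := EuclideanSpace.single ⟨0, hd⟩ 1 with hv₀def
  have hv₀ : ‖v₀‖ = 1 := by rw [hv₀def, EuclideanSpace.norm_single]; norm_num
  set y₀ : EuclideanSpace ℝ (Fin d) := x₀ + (δ/2) • v₀ with hy₀def
  have hyx : ‖y₀ - x₀‖ = δ/2 := by
    rw [hy₀def]
    have : x₀ + (δ/2) • v₀ - x₀ = (δ/2) • v₀ := by module
    rw [this, norm_smul, hv₀, Real.norm_eq_abs, abs_of_pos (by linarith)]
    ring
  have hy₀ball : y₀ ∈ Metric.ball x₀ δ := by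
    rw [Metric.mem_ball, dist_eq_norm, hyx]; linarith
  have hy₀A : y₀ ∈ A := hδ hy₀ball
  have hne : y₀ ≠ x₀ := by
    intro h
    rw [h] at hyx
    simp at hyx
    linarith
  have hseg : segment ℝ x₀ y₀ ⊆ A :=
    le_trans ((convex_ball x₀ δ).segment_subset (Metric.mem_ball_self δpos) hy₀ball) hδ
  have hle0 : intrinsicDist A x₀ y₀ ≤ ENNReal.ofReal ‖y₀ - x₀‖ := intrinsicDist_le_of_segment hseg
  have hpos0 : 0 < intrinsicDist A x₀ y₀ :=
    lt_of_lt_of_le (edist_pos.mpr (fun h => hne h.symm)) (edist_le_intrinsicDist x₀ y₀)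
  have hfin0 : intrinsicDist A x₀ y₀ ≠ ⊤ := (hle0.trans_lt ENNReal.ofReal_lt_top).ne
  have hmem0 : ‖μ x₀ - μ y₀‖ / (intrinsicDist A x₀ y₀).toReal ∈ S1 :=
    ⟨x₀, hx₀, y₀, hy₀A, hpos0, hfin0, rfl⟩
  have hS1nonneg : 0 ≤ sSup S1 :=
    le_trans (div_nonneg (norm_nonneg _) ENNReal.toReal_nonneg) (le_csSup hS1bdd hmem0)
  apply le_antisymm
  · exact Real.sSup_le hub hM0
  · apply Real.sSup_le _ hS1nonneg
    rintro r ⟨x, hx, rfl⟩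
    by_contra hcon
    push_neg at hcon
    set c := sSup S1 with hcdef
    have hc0 : 0 ≤ c := hS1nonneg
    set f' := fderiv ℝ μ x with hf'def
    have hnotle : ¬ ‖f'‖ ≤ c := not_le.mpr hcon
    rw [ContinuousLinearMap.opNorm_le_iff hc0] at hnotle
    push_neg at hnotle
    obtain ⟨v, hv⟩ := hnotle
    have hvnorm : 0 < ‖v‖ := by
      rcases eq_or_lt_of_le (norm_nonneg v) with h | h
      · exfalso
        have hv0 : v = 0 := by rwa [eq_comm, norm_eq_zero] at h
        rw [hv0] at hv
        simp at hv
      · exact h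
    set ε := (‖f' v‖ - c * ‖v‖) / (2 * ‖v‖) with hεdef
    have hεpos : 0 < ε := div_pos (by linarith [hv]) (by positivity)
    have hlo := (hdiff x hx).hasFDerivAt.isLittleO
    rw [Asymptotics.isLittleO_iff] at hlo
    have hev := hlo hεpos
    obtain ⟨δx, δxpos, hδx⟩ := Metric.isOpen_iff.mp hAopen x hx
    have hball_ev : ∀ᶠ p in nhds x, p ∈ Metric.ball x δx :=
      Metric.ball_mem_nhds x δxpos
    obtain ⟨ρ, ρpos, hρ⟩ := Metric.eventually_nhds_iff.mp (hev.and hball_ev)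
    set t : ℝ := min ρ δx / (2 * ‖v‖) with htdef
    have htpos : 0 < t := by positivity
    set p : EuclideanSpace ℝ (Fin d) := x + t • v with hpdef
    have hpx : p - x = t • v := by rw [hpdef]; module
    have hpxn : ‖p - x‖ = t * ‖v‖ := by
      rw [hpx, norm_smul, Real.norm_eq_abs, abs_of_pos htpos]
    have hdistp : dist p x < ρ := by
      rw [dist_eq_norm, hpxn, htdef]
      calc min ρ δx / (2 * ‖v‖) * ‖v‖ = min ρ δx / 2 := by field_simp
        _ < ρ := by
          have := min_le_left ρ δx
          linarith
    obtain ⟨hp1, hp2⟩ := hρ hdistp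
    have hpA : p ∈ A := hδx hp2
    have hf'px : ‖f' (p - x)‖ = t * ‖f' v‖ := by
      rw [hpx, map_smul, norm_smul, Real.norm_eq_abs, abs_of_pos htpos]
    have h1 : ‖f' (p - x)‖ - ε * ‖p - x‖ ≤ ‖μ p - μ x‖ := by
      have htri := norm_sub_le (μ p - μ x) (μ p - μ x - f' (p - x))
      rw [show μ p - μ x - (μ p - μ x - f' (p - x)) = f' (p - x) by module] at htri
      linarith
    have hεv : ε * ‖v‖ = (‖f' v‖ - c * ‖v‖) / 2 := by
      rw [hεdef]; field_simp
    have hkey : c * ‖p - x‖ < ‖μ p - μ x‖ := by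
      have e1 : ‖f' (p - x)‖ - ε * ‖p - x‖ = t * (‖f' v‖ - ε * ‖v‖) := by
        rw [hf'px, hpxn]; ring
      have e2 : t * (‖f' v‖ - ε * ‖v‖) = t * ((‖f' v‖ + c * ‖v‖) / 2) := by
        rw [hεv]; ring
      have e3 : c * ‖p - x‖ = t * (c * ‖v‖) := by rw [hpxn]; ring
      calc c * ‖p - x‖ = t * (c * ‖v‖) := e3
        _ < t * ((‖f' v‖ + c * ‖v‖) / 2) := by
            apply mul_lt_mul_of_pos_left _ htpos
            linarith [hv]
        _ = t * (‖f' v‖ - ε * ‖v‖) := e2.symm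
        _ = ‖f' (p - x)‖ - ε * ‖p - x‖ := e1.symm
        _ ≤ ‖μ p - μ x‖ := h1
    -- intrinsic distance between x and p is exactly the norm
    have hsegp : segment ℝ x p ⊆ A :=
      le_trans ((convex_ball x δx).segment_subset (Metric.mem_ball_self δxpos) hp2) hδx
    have hρle : intrinsicDist A x p ≤ ENNReal.ofReal ‖p - x‖ := intrinsicDist_le_of_segment hsegp
    have hρge : ENNReal.ofReal ‖p - x‖ ≤ intrinsicDist A x p := by
      have h := edist_le_intrinsicDist (A := A) x p
      rwa [edist_dist, dist_eq_norm, norm_sub_rev] at h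
    have hρeq : intrinsicDist A x p = ENNReal.ofReal ‖p - x‖ := le_antisymm hρle hρge
    have hnormpos : 0 < ‖p - x‖ := by rw [hpxn]; positivity
    have hρpos : 0 < intrinsicDist A x p := by
      rw [hρeq]; exact ENNReal.ofReal_pos.mpr hnormpos
    have hρfin : intrinsicDist A x p ≠ ⊤ := by rw [hρeq]; exact ENNReal.ofReal_ne_top
    have hmem : ‖μ x - μ p‖ / (intrinsicDist A x p).toReal ∈ S1 :=
      ⟨x, hx, p, hpA, hρpos, hρfin, rfl⟩
    have hgt : c < ‖μ x - μ p‖ / (intrinsicDist A x p).toReal := by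
      rw [hρeq, ENNReal.toReal_ofReal (norm_nonneg _), lt_div_iff₀ hnormpos,
        norm_sub_rev (μ x) (μ p)]
      exact hkey
    have hle' := le_csSup hS1bdd hmem
    rw [← hcdef] at hle'
    linarith
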